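/- Consistency estimate in the a posteriori analysis (final step of the reliability proof): let Ω ⊆ ℝ² be a measurable set of finite Lebesgue measure and let g, g_h, λ, λ_h ∈ L²(Ω, ℝ²) with |λ(x)| ≤ 1 for a.e. x ∈ Ω. If ∫_Ω g(x) · (λ_h(x) − λ(x)) dx ≤ 0, then ∫_Ω (g(x) − g_h(x)) · (λ_h(x) − λ(x)) dx ≤ ∫_Ω ( |g_h(x)| − g_h(x) · λ_h(x) ) dx, where | · | and · denote the Euclidean norm and dot product on ℝ². (In the paper, g = ∇u, g_h = ∇u_h, and the right-hand side is the consistency estimator Σ_T η²_{con,T}.) -/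

import Mathlib

open scoped RealInnerProductSpace
open MeasureTheory

lemma memLp_integrable_inner {α : Type*} [MeasurableSpace α] {μ : Measure α}
    {E : Type*} [NormedAddCommGroup E] [InnerProductSpace ℝ E]
    {f g : α → E} (hf : MemLp f 2 μ) (hg : MemLp g 2 μ) :
    Integrable (fun x => ⟪f x, g x⟫) μ := by
  have h := L2.integrable_inner (𝕜 := ℝ) (hf.toLp f) (hg.toLp g)
  refine h.congr ?_
  filter_upwards [hf.coeFn_toLp, hg.coeFn_toLp] with x h1 h2
  rw [h1, h2]

/-- Consistency estimate in the a posteriori analysis (final step of the reliability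
proof): if `|λ| ≤ 1` a.e. on `Ω` and `∫_Ω g · (λ_h − λ) ≤ 0`, then
`∫_Ω (g − g_h) · (λ_h − λ) ≤ ∫_Ω (|g_h| − g_h · λ_h)`. -/
theorem consistency_estimate
    (Ω : Set (EuclideanSpace ℝ (Fin 2))) (hΩ : MeasurableSet Ω)
    (hfin : volume Ω < ⊤)
    (g gh lam lamh : EuclideanSpace ℝ (Fin 2) → EuclideanSpace ℝ (Fin 2))
    (hg : MemLp g 2 (volume.restrict Ω))
    (hgh : MemLp gh 2 (volume.restrict Ω))
    (hlam : MemLp lam 2 (volume.restrict Ω))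
    (hlamh : MemLp lamh 2 (volume.restrict Ω))
    (hbound : ∀ᵐ x ∂(volume.restrict Ω), ‖lam x‖ ≤ 1)
    (hineq : ∫ x in Ω, ⟪g x, lamh x - lam x⟫ ≤ 0) :
    ∫ x in Ω, ⟪g x - gh x, lamh x - lam x⟫ ≤ ∫ x in Ω, (‖gh x‖ - ⟪gh x, lamh x⟫) := by
  set μ := volume.restrict Ω
  haveI : IsFiniteMeasure μ := by
    constructor
    rwa [Measure.restrict_apply_univ]
  have hd : MemLp (fun x => lamh x - lam x) 2 μ := hlamh.sub hlam
  have i1 : Integrable (fun x => ⟪g x, lamh x - lam x⟫) μ := memLp_integrable_inner hg hd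
  have i2 : Integrable (fun x => ⟪gh x, lamh x - lam x⟫) μ := memLp_integrable_inner hgh hd
  have i3 : Integrable (fun x => ⟪gh x, lamh x⟫) μ := memLp_integrable_inner hgh hlamh
  have i4 : Integrable (fun x => ⟪gh x, lam x⟫) μ := memLp_integrable_inner hgh hlam
  have ighn : Integrable (fun x => ‖gh x‖) μ :=
    (hgh.integrable (by norm_num)).norm
  have split : ∫ x, ⟪g x - gh x, lamh x - lam x⟫ ∂μ
      = (∫ x, ⟪g x, lamh x - lam x⟫ ∂μ) - ∫ x, ⟪gh x, lamh x - lam x⟫ ∂μ := by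
    rw [← integral_sub i1 i2]
    congr 1; ext x; rw [inner_sub_left]
  have split2 : ∫ x, ⟪gh x, lamh x - lam x⟫ ∂μ
      = (∫ x, ⟪gh x, lamh x⟫ ∂μ) - ∫ x, ⟪gh x, lam x⟫ ∂μ := by
    rw [← integral_sub i3 i4]
    congr 1; ext x; rw [inner_sub_right]
  have hmono : ∫ x, ⟪gh x, lam x⟫ ∂μ ≤ ∫ x, ‖gh x‖ ∂μ := by
    refine integral_mono_ae i4 ighn ?_
    filter_upwards [hbound] with x hx
    calc ⟪gh x, lam x⟫ ≤ ‖gh x‖ * ‖lam x‖ := real_inner_le_norm _ _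
      _ ≤ ‖gh x‖ * 1 := by
          exact mul_le_mul_of_nonneg_left hx (norm_nonneg _)
      _ = ‖gh x‖ := mul_one _
  have hrhs : ∫ x, (‖gh x‖ - ⟪gh x, lamh x⟫) ∂μ
      = (∫ x, ‖gh x‖ ∂μ) - ∫ x, ⟪gh x, lamh x⟫ ∂μ := integral_sub ighn i3
  rw [split, split2, hrhs]
  linarith
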